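/- For every integer g ≥ 2, the set of matrices A ∈ Sp(2g, ℤ) whose leading eigenvalue (a real eigenvalue μ > 1 with |α| ≤ μ for all complex eigenvalues α of A) is a bi-Perron algebraic integer and for which every complex root of the characteristic polynomial of A has multiplicity at least 2 is infinite. -/

import Mathlib

open Matrix Polynomial

private lemma my_charmatrix_blockDiagonal {R : Type*} [CommRing R] {o m : Type*} [Fintype o]
    [DecidableEq o] [Fintype m] [DecidableEq m] (M : o → Matrix m m R) :
    charmatrix (blockDiagonal M) = blockDiagonal (fun k => charmatrix (M k)) := by
  ext ⟨i, k⟩ ⟨j, l⟩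
  by_cases hkl : k = l
  · subst hkl
    by_cases hij : i = j <;>
      simp [charmatrix_apply, blockDiagonal_apply, diagonal_apply, Prod.ext_iff, hij]
  · simp [charmatrix_apply, blockDiagonal_apply, diagonal_apply, Prod.ext_iff, hkl]

private lemma my_charpoly_blockDiagonal {R : Type*} [CommRing R] {o m : Type*} [Fintype o]
    [DecidableEq o] [Fintype m] [DecidableEq m] (M : o → Matrix m m R) :
    (blockDiagonal M).charpoly = ∏ k, (M k).charpoly := by
  rw [Matrix.charpoly, my_charmatrix_blockDiagonal, det_blockDiagonal]
  rfl

private lemma my_charpoly_fin_two {R : Type*} [CommRing R] (a b c d : R) :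
    (!![a, b; c, d]).charpoly = X ^ 2 - C (a + d) * X + C (a * d - b * c) := by
  rw [Matrix.charpoly, det_fin_two]
  simp [charmatrix_apply, diagonal_apply]
  ring

private lemma my_fromBlocks_eq_reindex {R : Type*} [CommRing R] {g : ℕ} (a b c d : R) :
    (fromBlocks (a • (1 : Matrix (Fin g) (Fin g) R)) (b • 1) (c • 1) (d • 1)) =
      reindex ((finTwoEquiv.prodCongr (Equiv.refl (Fin g))).trans (Equiv.boolProdEquivSum (Fin g)))
        ((finTwoEquiv.prodCongr (Equiv.refl (Fin g))).trans (Equiv.boolProdEquivSum (Fin g)))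
        (blockDiagonal (fun _ : Fin g => !![a, b; c, d])) := by
  ext (i | i) (j | j) <;>
    simp [blockDiagonal_apply, fromBlocks, one_apply, Equiv.boolProdEquivSum, finTwoEquiv,
      smul_ite, eq_comm, -Bool.true_eq]

private lemma my_charpoly_fromBlocks_smul_one {R : Type*} [CommRing R] {g : ℕ} (a b c d : R) :
    (fromBlocks (a • (1 : Matrix (Fin g) (Fin g) R)) (b • 1) (c • 1) (d • 1) :
      Matrix (Fin g ⊕ Fin g) (Fin g ⊕ Fin g) R).charpoly =
      (X ^ 2 - C (a + d) * X + C (a * d - b * c)) ^ g := by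
  rw [my_fromBlocks_eq_reindex, Matrix.charpoly_reindex, my_charpoly_blockDiagonal]
  simp [my_charpoly_fin_two]

private lemma my_symp_fromBlocks {R : Type*} [CommRing R] {g : ℕ} (a b c d : R)
    (h : a * d - b * c = 1) :
    (fromBlocks (a • (1 : Matrix (Fin g) (Fin g) R)) (b • 1) (c • 1) (d • 1))ᵀ *
        (fromBlocks 0 1 (-1) 0 : Matrix (Fin g ⊕ Fin g) (Fin g ⊕ Fin g) R) *
        (fromBlocks (a • (1 : Matrix (Fin g) (Fin g) R)) (b • 1) (c • 1) (d • 1)) =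
      fromBlocks 0 1 (-1) 0 := by
  simp only [fromBlocks_transpose, transpose_smul, transpose_one, fromBlocks_multiply,
    Matrix.smul_mul, Matrix.mul_smul, Matrix.one_mul, Matrix.mul_one, smul_smul,
    Matrix.mul_zero, Matrix.zero_mul, Matrix.mul_neg, Matrix.neg_mul, smul_neg,
    zero_add, add_zero, smul_zero, zero_mul, mul_one, one_mul, neg_zero]
  have e1 : -((a * c) • (1 : Matrix (Fin g) (Fin g) R)) + (c * a) • 1 = 0 := by
    rw [← neg_smul, ← add_smul]; ring_nf; simp
  have e2 : -((b * c) • (1 : Matrix (Fin g) (Fin g) R)) + (d * a) • 1 = 1 := by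
    rw [← neg_smul, ← add_smul, show -(b * c) + d * a = 1 by linear_combination h, one_smul]
  have e3 : -((a * d) • (1 : Matrix (Fin g) (Fin g) R)) + (c * b) • 1 = -1 := by
    rw [← neg_smul, ← add_smul, show -(a * d) + c * b = -1 by linear_combination -h, neg_smul,
      one_smul]
  have e4 : -((b * d) • (1 : Matrix (Fin g) (Fin g) R)) + (d * b) • 1 = 0 := by
    rw [← neg_smul, ← add_smul]; ring_nf; simp
  rw [e1, e2, e3, e4]

theorem infinite_symplectic_biPerron_no_simple_eigenvalue (g : ℕ) (hg : 2 ≤ g) :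
    { A : Matrix (Fin g ⊕ Fin g) (Fin g ⊕ Fin g) ℤ |
      Aᵀ * Matrix.fromBlocks 0 1 (-1) 0 * A = Matrix.fromBlocks 0 1 (-1) 0 ∧
      ∃ μ : ℝ, 1 < μ ∧
        (A.map (Int.cast : ℤ → ℂ)).charpoly.IsRoot (μ : ℂ) ∧
        (∀ α : ℂ, (A.map (Int.cast : ℤ → ℂ)).charpoly.IsRoot α → ‖α‖ ≤ μ) ∧
        IsIntegral ℤ μ ∧
        (∀ z : ℂ, ((minpoly ℚ μ).map (algebraMap ℚ ℂ)).IsRoot z →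
          1 / μ ≤ ‖z‖ ∧ ‖z‖ ≤ μ) ∧
        (∀ α : ℂ, (A.map (Int.cast : ℤ → ℂ)).charpoly.IsRoot α →
          2 ≤ Polynomial.rootMultiplicity α (A.map (Int.cast : ℤ → ℂ)).charpoly) }.Infinite := by
  have hg0 : 0 < g := by omega
  have hinj : Function.Injective (fun n : ℕ =>
      (fromBlocks (((n : ℤ) + 2) • 1) ((1 : ℤ) • 1) (((n : ℤ) + 1) • 1) ((1 : ℤ) • 1) :
        Matrix (Fin g ⊕ Fin g) (Fin g ⊕ Fin g) ℤ)) := by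
    intro m n hmn
    have h := congrFun (congrFun hmn (Sum.inl ⟨0, hg0⟩)) (Sum.inl ⟨0, hg0⟩)
    simp only [fromBlocks_apply₁₁, Matrix.smul_apply, Matrix.one_apply_eq, smul_eq_mul,
      mul_one] at h
    have : (m : ℤ) = n := by linarith
    exact_mod_cast this
  apply Set.infinite_of_injective_forall_mem hinj
  intro n
  refine ⟨my_symp_fromBlocks _ _ _ _ (by ring), ?_⟩
  -- the characteristic polynomial over ℂ
  have hcpZ : (fromBlocks (((n : ℤ) + 2) • 1) ((1 : ℤ) • 1) (((n : ℤ) + 1) • 1) ((1 : ℤ) • 1) :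
      Matrix (Fin g ⊕ Fin g) (Fin g ⊕ Fin g) ℤ).charpoly =
      (X ^ 2 - C ((n : ℤ) + 3) * X + C 1) ^ g := by
    rw [my_charpoly_fromBlocks_smul_one]
    norm_num
    ring_nf
  have hcp : ((fromBlocks (((n : ℤ) + 2) • 1) ((1 : ℤ) • 1) (((n : ℤ) + 1) • 1) ((1 : ℤ) • 1) :
      Matrix (Fin g ⊕ Fin g) (Fin g ⊕ Fin g) ℤ).map (Int.cast : ℤ → ℂ)).charpoly =
      ((X : ℂ[X]) ^ 2 - C ((n : ℂ) + 3) * X + 1) ^ g := by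
    rw [show (Int.cast : ℤ → ℂ) = ⇑(Int.castRingHom ℂ) from rfl, Matrix.charpoly_map, hcpZ]
    simp only [Polynomial.map_pow, Polynomial.map_add, Polynomial.map_sub, Polynomial.map_mul,
      Polynomial.map_X, Polynomial.map_C, Polynomial.map_one]
    norm_num
  -- the real quantities
  set t : ℝ := (n : ℝ) + 3 with ht
  have ht3 : (3 : ℝ) ≤ t := by
    rw [ht]; have : (0 : ℝ) ≤ n := Nat.cast_nonneg n; linarith
  have hs0 : 0 ≤ Real.sqrt (t ^ 2 - 4) := Real.sqrt_nonneg _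
  have hs2 : Real.sqrt (t ^ 2 - 4) ^ 2 = t ^ 2 - 4 :=
    Real.sq_sqrt (by nlinarith)
  set s : ℝ := Real.sqrt (t ^ 2 - 4) with hsdef
  set μ : ℝ := (t + s) / 2 with hμdef
  have hμ1 : 1 < μ := by rw [hμdef]; linarith
  have hμ0 : 0 < μ := by linarith
  have hμeq : μ ^ 2 - t * μ + 1 = 0 := by
    have : μ ^ 2 - t * μ + 1 = (s ^ 2 - (t ^ 2 - 4)) / 4 := by rw [hμdef]; ring
    rw [this, hs2]; ring
  set μ' : ℝ := t - μ with hμ'def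
  have hμμ' : μ * μ' = 1 := by rw [hμ'def]; linear_combination -hμeq
  have hμ'inv : μ' = 1 / μ := by rw [eq_div_iff (ne_of_gt hμ0), mul_comm]; exact hμμ'
  have hμ'0 : 0 < μ' := by rw [hμ'inv]; positivity
  have hμ'le : μ' ≤ μ := by
    rw [hμ'inv]
    calc 1 / μ ≤ 1 := by rw [div_le_one hμ0]; linarith
    _ ≤ μ := by linarith
  have hinvle : 1 / μ ≤ μ := by rw [← hμ'inv]; exact hμ'le
  -- complex sums/products
  have hsum : μ + μ' = (n : ℝ) + 3 := by rw [hμ'def, ht]; ring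
  have h1' : (μ : ℂ) + (μ' : ℂ) = (n : ℂ) + 3 := by exact_mod_cast congrArg Complex.ofReal hsum
  have h2' : (μ : ℂ) * (μ' : ℂ) = 1 := by exact_mod_cast congrArg Complex.ofReal hμμ'
  have hpoly : ((X : ℂ[X]) ^ 2 - C ((n : ℂ) + 3) * X + 1) =
      (X - C (μ : ℂ)) * (X - C (μ' : ℂ)) := by
    have hrhs : (X - C (μ : ℂ)) * (X - C (μ' : ℂ)) =
        X ^ 2 - C ((μ : ℂ) + (μ' : ℂ)) * X + C ((μ : ℂ) * (μ' : ℂ)) := by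
      rw [C_add, C_mul]; ring
    rw [hrhs, h1', h2', C_1]
  have hq : ((fromBlocks (((n : ℤ) + 2) • 1) ((1 : ℤ) • 1) (((n : ℤ) + 1) • 1) ((1 : ℤ) • 1) :
      Matrix (Fin g ⊕ Fin g) (Fin g ⊕ Fin g) ℤ).map (Int.cast : ℤ → ℂ)).charpoly =
      ((X - C (μ : ℂ)) * (X - C (μ' : ℂ))) ^ g := by rw [hcp, hpoly]
  have hgne : g ≠ 0 := by omega
  have hroot : ∀ α : ℂ,
      ((fromBlocks (((n : ℤ) + 2) • 1) ((1 : ℤ) • 1) (((n : ℤ) + 1) • 1) ((1 : ℤ) • 1) :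
        Matrix (Fin g ⊕ Fin g) (Fin g ⊕ Fin g) ℤ).map (Int.cast : ℤ → ℂ)).charpoly.IsRoot α ↔
      α = (μ : ℂ) ∨ α = (μ' : ℂ) := by
    intro α
    rw [hq]
    simp [IsRoot, eval_pow, pow_eq_zero_iff hgne, mul_eq_zero, sub_eq_zero]
  refine ⟨μ, hμ1, ?_, ?_, ?_, ?_, ?_⟩
  · exact (hroot _).2 (Or.inl rfl)
  · intro α hα
    rcases (hroot α).1 hα with h | h <;> rw [h, Complex.norm_real, Real.norm_eq_abs]
    · rw [abs_of_pos hμ0]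
    · rw [abs_of_pos hμ'0]; exact hμ'le
  · refine ⟨X ^ 2 - C ((n : ℤ) + 3) * X + 1, ?_, ?_⟩
    · have : (X : ℤ[X]) ^ 2 - C ((n : ℤ) + 3) * X + 1 = X ^ 2 + (1 - C ((n : ℤ) + 3) * X) := by
        ring
      rw [this]
      apply monic_X_pow_add
      apply lt_of_le_of_lt (degree_sub_le _ _)
      simp only [degree_one, max_lt_iff]
      constructor
      · decide
      · apply lt_of_le_of_lt (degree_mul_le _ _)
        apply lt_of_le_of_lt (add_le_add degree_C_le degree_X_le)
        decide
    · rw [← aeval_def, _root_.map_add, _root_.map_sub, _root_.map_pow, _root_.map_mul, aeval_X,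
        aeval_C, _root_.map_one,
        show (algebraMap ℤ ℝ) ((n : ℤ) + 3) = (n : ℝ) + 3 by rw [eq_intCast]; push_cast; ring]
      linear_combination hμeq + μ * ht
  · intro z hz
    have hdvd : minpoly ℚ μ ∣ X ^ 2 - C ((n : ℚ) + 3) * X + 1 := by
      apply minpoly.dvd
      rw [_root_.map_add, _root_.map_sub, _root_.map_pow, _root_.map_mul, aeval_X,
        aeval_C, _root_.map_one,
        show (algebraMap ℚ ℝ) ((n : ℚ) + 3) = (n : ℝ) + 3 by rw [eq_ratCast]; push_cast; ring]
      linear_combination hμeq + μ * ht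
    have hzroot : ((X ^ 2 - C ((n : ℚ) + 3) * X + 1 : ℚ[X]).map (algebraMap ℚ ℂ)).IsRoot z := by
      exact hz.dvd (Polynomial.map_dvd (algebraMap ℚ ℂ) hdvd)
    have hz2 : z ^ 2 - ((n : ℂ) + 3) * z + 1 = 0 := by
      have := hzroot
      simp only [Polynomial.map_add, Polynomial.map_sub, Polynomial.map_mul, Polynomial.map_pow,
        Polynomial.map_one, Polynomial.map_X, Polynomial.map_C, IsRoot, eval_add, eval_sub,
        eval_mul, eval_pow, eval_X, eval_C, eval_one] at this
      have hcast : (algebraMap ℚ ℂ) ((n : ℚ) + 3) = (n : ℂ) + 3 := by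
        rw [map_add, map_natCast, map_ofNat]
      rw [hcast] at this
      exact this
    have : (z - (μ : ℂ)) * (z - (μ' : ℂ)) = 0 := by
      have h := congrArg (eval z) hpoly
      simp only [eval_add, eval_sub, eval_mul, eval_pow, eval_X, eval_C, eval_one] at h
      rw [← h]
      exact hz2
    rcases mul_eq_zero.1 this with h | h
    · have : z = (μ : ℂ) := by linear_combination h
      rw [this, Complex.norm_real, Real.norm_eq_abs, abs_of_pos hμ0]
      exact ⟨hinvle, le_refl _⟩
    · have : z = (μ' : ℂ) := by linear_combination h
      rw [this, Complex.norm_real, Real.norm_eq_abs, abs_of_pos hμ'0, hμ'inv]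
      exact ⟨le_refl _, hinvle⟩
  · intro α hα
    have hq0 : ((fromBlocks (((n : ℤ) + 2) • 1) ((1 : ℤ) • 1) (((n : ℤ) + 1) • 1)
        ((1 : ℤ) • 1) : Matrix (Fin g ⊕ Fin g) (Fin g ⊕ Fin g) ℤ).map
        (Int.cast : ℤ → ℂ)).charpoly ≠ 0 := by
      rw [hq]
      exact pow_ne_zero _ (mul_ne_zero (X_sub_C_ne_zero _) (X_sub_C_ne_zero _))
    rw [Polynomial.le_rootMultiplicity_iff hq0]
    rw [hq, mul_pow]
    rcases (hroot α).1 hα with h | h <;> rw [h]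
    · exact Dvd.dvd.mul_right (pow_dvd_pow _ hg) _
    · exact Dvd.dvd.mul_left (pow_dvd_pow _ hg) _
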